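/- Let C be a category with finite limits in which: every morphism f factors as f = e ≫ m with e a regular epimorphism and m a monomorphism; regular epimorphisms are stable under pullback (in any pullback square whose bottom edge is a regular epimorphism, the top edge is a regular epimorphism); every regular epimorphism with codomain the terminal object ⊤ has a section; and the terminal object is a strong generator. Then a morphism p : Y ⟶ X is a regular epimorphism if and only if every global element x : ⊤ ⟶ X lifts through p (there exists y : ⊤ ⟶ Y with y ≫ p = x). -/

import Mathlib

open CategoryTheory CategoryTheory.Limits

universe v u

/-- A regular epi composed with an isomorphism is a regular epi. -/
noncomputable def regularEpiCompIso {C : Type u} [Category.{v} C] {A B D : C}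
    (e : A ⟶ B) (m : B ⟶ D) (he : RegularEpi e) [IsIso m] : RegularEpi (e ≫ m) where
  W := he.W
  left := he.left
  right := he.right
  w := by rw [← Category.assoc, ← Category.assoc, he.w]
  isColimit := Cofork.IsColimit.mk _
    (fun s => inv m ≫ (he.desc' s.π s.condition).1)
    (fun s => by
      simp only [Cofork.π_ofπ, Category.assoc, IsIso.hom_inv_id_assoc]
      exact (he.desc' s.π s.condition).2)
    (fun s k hk => by
      simp only [Cofork.π_ofπ] at hk
      have : Epi (e ≫ m) := @epi_comp _ _ _ _ _ _ (he.epi) _ _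
      rw [← cancel_epi (e ≫ m), hk, Category.assoc, IsIso.hom_inv_id_assoc]
      exact ((he.desc' s.π s.condition).2).symm)

/-- In a finitely complete category with regular epi–mono factorizations,
pullback-stable regular epis, split regular epis into the terminal object, and with
the terminal object a strong generator, a morphism is a regular epimorphism iff every
global element of its codomain lifts through it. -/
theorem regularEpi_iff_global_elements_lift {C : Type u} [Category.{v} C]
    [HasFiniteLimits C]
    (hfact : ∀ {A B : C} (f : A ⟶ B), ∃ (I : C) (e : A ⟶ I) (m : I ⟶ B),
      Nonempty (RegularEpi e) ∧ Mono m ∧ e ≫ m = f)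
    (hstab : ∀ {W X Y Z : C} (fst : W ⟶ X) (snd : W ⟶ Y) (f : X ⟶ Z) (g : Y ⟶ Z),
      IsPullback fst snd f g → Nonempty (RegularEpi g) → Nonempty (RegularEpi fst))
    (hsplit : ∀ {X : C} (p : X ⟶ ⊤_ C), Nonempty (RegularEpi p) →
      ∃ s : ⊤_ C ⟶ X, s ≫ p = 𝟙 (⊤_ C))
    (hsg : ∀ {A X : C} (m : A ⟶ X), Mono m →
      (∀ x : ⊤_ C ⟶ X, ∃ x' : ⊤_ C ⟶ A, x' ≫ m = x) → IsIso m)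
    {Y X : C} (p : Y ⟶ X) :
    Nonempty (RegularEpi p) ↔ ∀ x : ⊤_ C ⟶ X, ∃ y : ⊤_ C ⟶ Y, y ≫ p = x := by
  constructor
  · intro hp x
    -- pull back p along x; the resulting map to ⊤ is a regular epi, hence split
    have hfst : Nonempty (RegularEpi (pullback.fst x p)) :=
      hstab _ _ _ _ (IsPullback.of_hasPullback x p) hp
    obtain ⟨s, hs⟩ := hsplit (pullback.fst x p) hfst
    refine ⟨s ≫ pullback.snd x p, ?_⟩
    rw [Category.assoc, ← pullback.condition, ← Category.assoc, hs, Category.id_comp]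
  · intro hlift
    obtain ⟨I, e, m, ⟨he⟩, hm, hcomp⟩ := hfact p
    have : IsIso m := by
      apply hsg m hm
      intro x
      obtain ⟨y, hy⟩ := hlift x
      exact ⟨y ≫ e, by rw [Category.assoc, hcomp, hy]⟩
    subst hcomp
    exact ⟨regularEpiCompIso e m he⟩
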